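/- Directional (Gâteaux) derivative of J. Let D ⊂ ℝ^d be an open bounded set, let u, ψ ∈ L²(D) have weak gradients ∇u, ∇ψ ∈ L²(D;ℝ^d), and let v, φ ∈ L^∞(D) have weak gradients ∇v, ∇φ ∈ L²(D;ℝ^d). Then the real function t ↦ J(u + tψ, v + tφ) is differentiable at t = 0 and its derivative at 0 equals A(v;u,ψ) + B(u;v,φ), where A(v;u,ψ) = ∫_D ((1−κ)v²+κ)(1+β^α|T(v,∇u)|^{2α})^{−(1/α+1)} ∇u·∇ψ dx and B(u;v,φ) = ∫_D [2ρ∇v·∇φ − δφ + (1−κ)|∇u|²(1+β^α|T(v,∇u)|^{2α})^{−(1/α+1)} v φ] dx. -/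

import Mathlib

open MeasureTheory Filter Asymptotics
open scoped Topology ENNReal

noncomputable section

abbrev Euc (d : ℕ) : Type := EuclideanSpace ℝ (Fin d)

/-- `u ∈ L²(D)` together with a weak gradient `U ∈ L²(D; ℝ^d)`. -/
def HasWeakGradOn {d : ℕ} (D : Set (Euc d)) (u : Euc d → ℝ) (U : Euc d → Euc d) : Prop :=
  MemLp u 2 (volume.restrict D) ∧ MemLp U 2 (volume.restrict D) ∧
    ∀ φ : Euc d → ℝ, ContDiff ℝ (⊤ : ℕ∞) φ → HasCompactSupport φ → tsupport φ ⊆ D →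
      ∀ j : Fin d,
        ∫ x in D, u x * fderiv ℝ φ x (EuclideanSpace.single j 1) =
          - ∫ x in D, φ x * U x j

/-- The denominator `(1 + β^α |T(s,g)|^{2α})^{1/α + 1}` with `|T(s,g)|² = ((1-κ)s²+κ)|g|²`. -/
def denomD {d : ℕ} (α β κ : ℝ) (s : ℝ) (g : Euc d) : ℝ :=
  (1 + β ^ α * (((1 - κ) * s ^ 2 + κ) * ‖g‖ ^ 2) ^ α) ^ (1 / α + 1)

/-- The elastic form `A(v; u, ψ)`, expressed through the weak gradients `gu = ∇u`, `gψ = ∇ψ`. -/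
def formA {d : ℕ} (α β κ : ℝ) (D : Set (Euc d)) (v : Euc d → ℝ)
    (gu gψ : Euc d → Euc d) : ℝ :=
  ∫ x in D, (((1 - κ) * v x ^ 2 + κ) / denomD α β κ (v x) (gu x)) * (inner ℝ (gu x) (gψ x) : ℝ)

/-- The phase-field form `B(u; v, φ)`, via the weak gradients `gu = ∇u`, `gv = ∇v`, `gφ = ∇φ`. -/
def formB {d : ℕ} (α β κ ρ δ : ℝ) (D : Set (Euc d)) (v φ : Euc d → ℝ)
    (gu gv gφ : Euc d → Euc d) : ℝ :=
  ∫ x in D, (2 * ρ * (inner ℝ (gv x) (gφ x) : ℝ) - δ * φ x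
    + ((1 - κ) * ‖gu x‖ ^ 2 / denomD α β κ (v x) (gu x)) * v x * φ x)

/-- The regularized total energy `J(u, v)`, via the weak gradients `gu = ∇u`, `gv = ∇v`. -/
def energyJ {d : ℕ} (α β κ ρ δ : ℝ) (D : Set (Euc d)) (v : Euc d → ℝ)
    (gu gv : Euc d → Euc d) : ℝ :=
  ∫ x in D, ((((1 - κ) * v x ^ 2 + κ) * ‖gu x‖ ^ 2) /
      (2 * (1 + β ^ α * (((1 - κ) * v x ^ 2 + κ) * ‖gu x‖ ^ 2) ^ α) ^ (1 / α))
    + ρ * ‖gv x‖ ^ 2 + δ * (1 - v x))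

/-! ### Auxiliary lemmas -/

lemma one_le_aux {α β w : ℝ} (hβ : 0 ≤ β) (hw : 0 ≤ w) (e : ℝ) (he : 0 ≤ e) :
    (1:ℝ) ≤ (1 + β ^ α * w ^ α) ^ e := by
  have hb : (1:ℝ) ≤ 1 + β ^ α * w ^ α :=
    le_add_of_nonneg_right (mul_nonneg (Real.rpow_nonneg hβ α) (Real.rpow_nonneg hw α))
  calc (1:ℝ) = 1 ^ e := (Real.one_rpow e).symm
  _ ≤ (1 + β ^ α * w ^ α) ^ e := Real.rpow_le_rpow zero_le_one hb he

lemma ratio_hasDerivAt {α β : ℝ} (hα : 0 < α) (hβ : 0 ≤ β) {w : ℝ → ℝ} {w' t₀ : ℝ}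
    (hw : ∀ t, 0 ≤ w t) (hd : HasDerivAt w w' t₀) :
    HasDerivAt (fun t => w t / (2 * (1 + β ^ α * w t ^ α) ^ (1 / α)))
      (w' / (2 * (1 + β ^ α * w t₀ ^ α) ^ (1 / α + 1))) t₀ := by
  have hαinv : 0 ≤ 1/α := by positivity
  rcases eq_or_lt_of_le (hw t₀) with h0 | h0
  · have h0' : w t₀ = 0 := h0.symm
    have hmin : IsLocalMin w t₀ := Filter.Eventually.of_forall fun t => by rw [h0']; exact hw t
    have hw0 : w' = 0 := hmin.hasDerivAt_eq_zero hd
    rw [hw0, zero_div, hasDerivAt_iff_isLittleO]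
    have hwo : (fun t => w t) =o[𝓝 t₀] fun t => t - t₀ := by
      rw [hasDerivAt_iff_isLittleO] at hd
      simpa [h0', hw0] using hd
    have hO : (fun t => w t / (2 * (1 + β ^ α * w t ^ α) ^ (1 / α))) =O[𝓝 t₀] fun t => w t := by
      refine IsBigO.of_bound 1 (Filter.Eventually.of_forall fun t => ?_)
      have hdt : (1:ℝ) ≤ 2 * (1 + β ^ α * w t ^ α) ^ (1/α) := by
        have := one_le_aux (α := α) hβ (hw t) (1/α) hαinv; linarith
      have hdt0 : (0:ℝ) < 2 * (1 + β ^ α * w t ^ α) ^ (1/α) := lt_of_lt_of_le one_pos hdt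
      rw [one_mul, Real.norm_eq_abs, Real.norm_eq_abs, abs_div, abs_of_pos hdt0]
      exact div_le_self (abs_nonneg _) hdt
    simpa [h0', hw0] using hO.trans_isLittleO hwo
  · have hB : 0 ≤ β ^ α := Real.rpow_nonneg hβ α
    have hP : 0 < 1 + β ^ α * w t₀ ^ α := by positivity
    have key : HasDerivAt (fun W : ℝ => W / (2 * (1 + β ^ α * W ^ α) ^ (1/α)))
        (1 / (2 * (1 + β ^ α * (w t₀) ^ α) ^ (1/α + 1))) (w t₀) := by
      have hi : HasDerivAt (fun W : ℝ => 1 + β ^ α * W ^ α)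
          (β ^ α * (α * w t₀ ^ (α - 1))) (w t₀) :=
        ((Real.hasDerivAt_rpow_const (Or.inl h0.ne')).const_mul (β ^ α)).const_add 1
      have ho : HasDerivAt (fun W : ℝ => 2 * (1 + β ^ α * W ^ α) ^ (1/α))
          (2 * (β ^ α * (α * w t₀ ^ (α - 1)) * (1/α) * (1 + β ^ α * w t₀ ^ α) ^ (1/α - 1)))
          (w t₀) :=
        (hi.rpow_const (Or.inl hP.ne')).const_mul 2
      have hne : 2 * (1 + β ^ α * w t₀ ^ α) ^ (1/α) ≠ 0 := by positivity
      have hdiv := (hasDerivAt_id (w t₀)).div ho hne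
      refine hdiv.congr_deriv ?_
      have e1 : (1 + β ^ α * w t₀ ^ α) ^ (1/α - 1)
          = (1 + β ^ α * w t₀ ^ α) ^ (1/α) / (1 + β ^ α * w t₀ ^ α) := by
        rw [Real.rpow_sub hP, Real.rpow_one]
      have e2 : (1 + β ^ α * w t₀ ^ α) ^ (1/α + 1)
          = (1 + β ^ α * w t₀ ^ α) ^ (1/α) * (1 + β ^ α * w t₀ ^ α) := by
        rw [Real.rpow_add hP, Real.rpow_one]
      have e3 : w t₀ ^ (α - 1) = w t₀ ^ α / w t₀ := by
        rw [Real.rpow_sub h0, Real.rpow_one]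
      rw [e1, e2, e3]
      have hapos : 0 < (1 + β ^ α * w t₀ ^ α) ^ (1/α) := Real.rpow_pos_of_pos hP _
      field_simp
      simp only [id_eq]
      ring
    have h2 := key.comp t₀ hd
    simp only [Function.comp_def] at h2
    refine h2.congr_deriv ?_
    ring

lemma integrable_mul_L2 {X : Type*} [MeasurableSpace X] {μ : Measure X} {f g : X → ℝ}
    (hf : MemLp f 2 μ) (hg : MemLp g 2 μ) : Integrable (fun x => f x * g x) μ := by
  have h : MemLp (f • g) 1 μ := hg.smul hf (p := 2) (q := 2) (r := 1)
  rw [memLp_one_iff_integrable] at h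
  exact h

lemma abs_mul_le₂ {a b a' b' : ℝ} (ha : |a| ≤ a') (hb : |b| ≤ b') : |a * b| ≤ a' * b' := by
  rw [abs_mul]
  exact mul_le_mul ha hb (abs_nonneg _) ((abs_nonneg a).trans ha)

lemma abs_mul_le₃ {a b c a' b' c' : ℝ} (ha : |a| ≤ a') (hb : |b| ≤ b') (hc : |c| ≤ c') :
    |a * b * c| ≤ a' * b' * c' := by
  rw [abs_mul]
  exact mul_le_mul (abs_mul_le₂ ha hb) hc (abs_nonneg _)
    (mul_nonneg ((abs_nonneg a).trans ha) ((abs_nonneg b).trans hb))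

lemma abs_sub_add_le' (a b c : ℝ) : |a - b + c| ≤ |a| + |b| + |c| := by
  calc |a - b + c| ≤ |a - b| + |c| := abs_add_le _ _
  _ ≤ |a| + |b| + |c| := by
      have h : |a - b| ≤ |a| + |b| := by
        rw [sub_eq_add_neg]
        exact (abs_add_le _ _).trans (by rw [abs_neg])
      linarith

lemma continuous_rpow_const' {p : ℝ} (hp : 0 ≤ p) : Continuous fun x : ℝ => x ^ p :=
  continuous_iff_continuousAt.2 fun x => Real.continuousAt_rpow_const x p (Or.inr hp)

set_option maxHeartbeats 1600000 in
/-- **Directional (Gâteaux) derivative of `J`.**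
For `u, ψ ∈ H¹(D)` and `v, φ ∈ H¹(D) ∩ L^∞(D)`, the map `t ↦ J(u + tψ, v + tφ)` is
differentiable at `t = 0` with derivative `A(v;u,ψ) + B(u;v,φ)`. -/
theorem gateaux_derivative_of_J {d : ℕ} (hd : 1 ≤ d)
    (D : Set (Euc d)) (hD : IsOpen D) (hDb : Bornology.IsBounded D)
    (α β κ ρ δ : ℝ) (hα : 0 < α) (hβ : 0 ≤ β) (hκ : κ ∈ Set.Ioo (0 : ℝ) 1)
    (hρ : 0 < ρ) (hδ : 0 < δ)
    (u ψ : Euc d → ℝ) (gu gψ : Euc d → Euc d)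
    (hu : HasWeakGradOn D u gu) (hψ : HasWeakGradOn D ψ gψ)
    (v φ : Euc d → ℝ) (gv gφ : Euc d → Euc d)
    (hv : HasWeakGradOn D v gv) (hφ : HasWeakGradOn D φ gφ)
    (hvinf : MemLp v ⊤ (volume.restrict D)) (hφinf : MemLp φ ⊤ (volume.restrict D)) :
    HasDerivAt
      (fun t : ℝ => energyJ α β κ ρ δ D (fun x => v x + t * φ x)
        (fun x => gu x + t • gψ x) (fun x => gv x + t • gφ x))
      (formA α β κ D v gu gψ + formB α β κ ρ δ D v φ gu gv gφ) 0 := by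
  classical
  set μ := volume.restrict D with hμdef
  haveI : IsFiniteMeasure μ := by
    constructor
    rw [hμdef, Measure.restrict_apply_univ]
    exact hDb.measure_lt_top
  have h1κ : (0:ℝ) ≤ 1 - κ := by linarith [hκ.2]
  have hκ0 : (0:ℝ) < κ := hκ.1
  have hαinv : (0:ℝ) ≤ 1/α := by positivity
  have hB : 0 ≤ β ^ α := Real.rpow_nonneg hβ α
  -- L∞ bounds
  set Mv := (eLpNormEssSup v μ).toReal with hMvdef
  set Mφ := (eLpNormEssSup φ μ).toReal with hMφdef
  have hMv0 : 0 ≤ Mv := ENNReal.toReal_nonneg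
  have hMφ0 : 0 ≤ Mφ := ENNReal.toReal_nonneg
  have hvb : ∀ᵐ x ∂μ, |v x| ≤ Mv := by
    filter_upwards [ae_le_eLpNormEssSup (f := v) (μ := μ)] with x hx
    have hne : eLpNormEssSup v μ ≠ ⊤ := by
      rw [← eLpNorm_exponent_top]; exact hvinf.2.ne
    have := ENNReal.toReal_mono hne hx
    simpa [Real.norm_eq_abs] using this
  have hφb : ∀ᵐ x ∂μ, |φ x| ≤ Mφ := by
    filter_upwards [ae_le_eLpNormEssSup (f := φ) (μ := μ)] with x hx
    have hne : eLpNormEssSup φ μ ≠ ⊤ := by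
      rw [← eLpNorm_exponent_top]; exact hφinf.2.ne
    have := ENNReal.toReal_mono hne hx
    simpa [Real.norm_eq_abs] using this
  set M := Mv + Mφ with hMdef
  have hM0 : 0 ≤ M := add_nonneg hMv0 hMφ0
  -- positivity facts
  have hc0 : ∀ s : ℝ, 0 ≤ (1 - κ) * s ^ 2 + κ := fun s =>
    add_nonneg (mul_nonneg h1κ (sq_nonneg s)) hκ0.le
  have hw0 : ∀ (s : ℝ) (g : Euc d), 0 ≤ ((1 - κ) * s ^ 2 + κ) * ‖g‖ ^ 2 := fun s g =>
    mul_nonneg (hc0 s) (by positivity)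
  have hden1 : ∀ (s : ℝ) (g : Euc d), 1 ≤ denomD α β κ s g := fun s g => by
    unfold denomD
    exact one_le_aux hβ (hw0 s g) _ (by positivity)
  have hdenpos : ∀ (s : ℝ) (g : Euc d), 0 < denomD α β κ s g := fun s g =>
    lt_of_lt_of_le one_pos (hden1 s g)
  -- the family of integrands and its pointwise derivative
  set F : ℝ → Euc d → ℝ := fun t x =>
    (((1 - κ) * (v x + t * φ x) ^ 2 + κ) * ‖gu x + t • gψ x‖ ^ 2) /
        (2 * (1 + β ^ α * (((1 - κ) * (v x + t * φ x) ^ 2 + κ) * ‖gu x + t • gψ x‖ ^ 2) ^ α)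
          ^ (1 / α))
      + ρ * ‖gv x + t • gφ x‖ ^ 2 + δ * (1 - (v x + t * φ x)) with hFdef
  set F' : ℝ → Euc d → ℝ := fun t x =>
    (((1 - κ) * (v x + t * φ x) ^ 2 + κ) / denomD α β κ (v x + t * φ x) (gu x + t • gψ x)) *
        (inner ℝ (gu x + t • gψ x) (gψ x) : ℝ)
      + (2 * ρ * (inner ℝ (gv x + t • gφ x) (gφ x) : ℝ) - δ * φ x
        + ((1 - κ) * ‖gu x + t • gψ x‖ ^ 2 / denomD α β κ (v x + t * φ x) (gu x + t • gψ x)) *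
            (v x + t * φ x) * φ x) with hF'def
  -- pointwise differentiability
  have hptwise : ∀ (x : Euc d) (t : ℝ), HasDerivAt (fun t => F t x) (F' t x) t := by
    intro x t
    have hs : HasDerivAt (fun t : ℝ => v x + t * φ x) (φ x) t := by
      simpa using ((hasDerivAt_id t).mul_const (φ x)).const_add (v x)
    have hg : HasDerivAt (fun t : ℝ => gu x + t • gψ x) (gψ x) t := by
      simpa using ((hasDerivAt_id t).smul_const (gψ x)).const_add (gu x)
    have hh : HasDerivAt (fun t : ℝ => gv x + t • gφ x) (gφ x) t := by
      simpa using ((hasDerivAt_id t).smul_const (gφ x)).const_add (gv x)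
    have hcD : HasDerivAt (fun t : ℝ => (1 - κ) * (v x + t * φ x) ^ 2 + κ)
        ((1 - κ) * (2 * (v x + t * φ x) * φ x)) t := by
      have h := ((hs.pow 2).const_mul (1 - κ)).add_const κ
      refine h.congr_deriv ?_
      simp [pow_one]
    have hinn : HasDerivAt (fun t : ℝ => (inner ℝ (gu x + t • gψ x) (gu x + t • gψ x) : ℝ))
        ((inner ℝ (gu x + t • gψ x) (gψ x) : ℝ) + (inner ℝ (gψ x) (gu x + t • gψ x) : ℝ)) t :=
      HasDerivAt.inner ℝ hg hg
    have hwD : HasDerivAt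
        (fun t : ℝ => ((1 - κ) * (v x + t * φ x) ^ 2 + κ) * ‖gu x + t • gψ x‖ ^ 2)
        ((1 - κ) * (2 * (v x + t * φ x) * φ x) * ‖gu x + t • gψ x‖ ^ 2
          + ((1 - κ) * (v x + t * φ x) ^ 2 + κ)
            * (2 * (inner ℝ (gu x + t • gψ x) (gψ x) : ℝ))) t := by
      have heq : (fun t : ℝ => ((1 - κ) * (v x + t * φ x) ^ 2 + κ) * ‖gu x + t • gψ x‖ ^ 2)
          = fun t : ℝ => ((1 - κ) * (v x + t * φ x) ^ 2 + κ)
              * (inner ℝ (gu x + t • gψ x) (gu x + t • gψ x) : ℝ) := by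
        funext t; rw [real_inner_self_eq_norm_sq]
      rw [heq]
      refine (hcD.mul hinn).congr_deriv ?_
      rw [real_inner_self_eq_norm_sq, real_inner_comm (gψ x)]
      ring
    have hratio : HasDerivAt (fun t : ℝ =>
        (((1 - κ) * (v x + t * φ x) ^ 2 + κ) * ‖gu x + t • gψ x‖ ^ 2) /
          (2 * (1 + β ^ α * (((1 - κ) * (v x + t * φ x) ^ 2 + κ) * ‖gu x + t • gψ x‖ ^ 2) ^ α)
            ^ (1 / α)))
        (((1 - κ) * (2 * (v x + t * φ x) * φ x) * ‖gu x + t • gψ x‖ ^ 2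
          + ((1 - κ) * (v x + t * φ x) ^ 2 + κ)
            * (2 * (inner ℝ (gu x + t • gψ x) (gψ x) : ℝ))) /
          (2 * (1 + β ^ α * (((1 - κ) * (v x + t * φ x) ^ 2 + κ) * ‖gu x + t • gψ x‖ ^ 2) ^ α)
            ^ (1 / α + 1))) t :=
      ratio_hasDerivAt hα hβ (fun t' => hw0 _ _) hwD
    have hρD : HasDerivAt (fun t : ℝ => ρ * ‖gv x + t • gφ x‖ ^ 2)
        (ρ * ((inner ℝ (gv x + t • gφ x) (gφ x) : ℝ) + (inner ℝ (gφ x) (gv x + t • gφ x) : ℝ))) t := by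
      have heq : (fun t : ℝ => ρ * ‖gv x + t • gφ x‖ ^ 2)
          = fun t : ℝ => ρ * (inner ℝ (gv x + t • gφ x) (gv x + t • gφ x) : ℝ) := by
        funext t; rw [real_inner_self_eq_norm_sq]
      rw [heq]
      exact (HasDerivAt.inner ℝ hh hh).const_mul ρ
    have hδD : HasDerivAt (fun t : ℝ => δ * (1 - (v x + t * φ x))) (δ * (-φ x)) t := by
      have h := (hs.const_sub 1).const_mul δ
      convert h using 1
    have total := (hratio.add hρD).add hδD
    simp only [hFdef, hF'def]
    refine total.congr_deriv ?_
    unfold denomD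
    have hbase : (0:ℝ) < 1 + β ^ α
        * (((1 - κ) * (v x + t * φ x) ^ 2 + κ) * ‖gu x + t • gψ x‖ ^ 2) ^ α :=
      lt_of_lt_of_le one_pos (le_add_of_nonneg_right (mul_nonneg hB
        (Real.rpow_nonneg (hw0 _ _) α)))
    have hdne : (1 + β ^ α
        * (((1 - κ) * (v x + t * φ x) ^ 2 + κ) * ‖gu x + t • gψ x‖ ^ 2) ^ α) ^ (1/α + 1) ≠ 0 :=
      (Real.rpow_pos_of_pos hbase _).ne'
    rw [real_inner_comm (gφ x)]
    field_simp
    ring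
  -- measurability
  have hsA : ∀ t : ℝ, AEMeasurable (fun x => v x + t * φ x) μ := fun t =>
    hv.1.1.aemeasurable.add (hφ.1.1.aemeasurable.const_mul t)
  have hgA : ∀ t : ℝ, AEStronglyMeasurable (fun x => gu x + t • gψ x) μ := fun t =>
    hu.2.1.1.add (hψ.2.1.1.const_smul t)
  have hhA : ∀ t : ℝ, AEStronglyMeasurable (fun x => gv x + t • gφ x) μ := fun t =>
    hv.2.1.1.add (hφ.2.1.1.const_smul t)
  have hwA : ∀ t : ℝ, AEMeasurable
      (fun x => ((1 - κ) * (v x + t * φ x) ^ 2 + κ) * ‖gu x + t • gψ x‖ ^ 2) μ := fun t =>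
    ((((hsA t).pow_const 2).const_mul (1 - κ)).add_const κ).mul
      (((hgA t).norm.aemeasurable).pow_const 2)
  have hbaseA : ∀ t : ℝ, AEMeasurable (fun x => 1 + β ^ α
      * (((1 - κ) * (v x + t * φ x) ^ 2 + κ) * ‖gu x + t • gψ x‖ ^ 2) ^ α) μ := fun t =>
    ((((continuous_rpow_const' hα.le).measurable.comp_aemeasurable (hwA t)).const_mul (β ^ α)).const_add 1)
  have hFmeas : ∀ t : ℝ, AEStronglyMeasurable (F t) μ := by
    intro t
    simp only [hFdef]
    apply AEMeasurable.aestronglyMeasurable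
    exact (((hwA t).div
        (((continuous_rpow_const' hαinv).measurable.comp_aemeasurable (hbaseA t)).const_mul 2)).add
      ((((hhA t).norm.aemeasurable).pow_const 2).const_mul ρ)).add
        (((hsA t).const_sub 1).const_mul δ)
  -- the two limit integrands
  set fA : Euc d → ℝ := fun x =>
    (((1 - κ) * v x ^ 2 + κ) / denomD α β κ (v x) (gu x)) * (inner ℝ (gu x) (gψ x) : ℝ)
    with hfAdef
  set fB : Euc d → ℝ := fun x =>
    2 * ρ * (inner ℝ (gv x) (gφ x) : ℝ) - δ * φ x
      + ((1 - κ) * ‖gu x‖ ^ 2 / denomD α β κ (v x) (gu x)) * v x * φ x with hfBdef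
  have hw0A : AEMeasurable (fun x => ((1 - κ) * v x ^ 2 + κ) * ‖gu x‖ ^ 2) μ :=
    (((hv.1.1.aemeasurable.pow_const 2).const_mul (1 - κ)).add_const κ).mul
      ((hu.2.1.1.norm.aemeasurable).pow_const 2)
  have hdenomA : AEMeasurable (fun x => denomD α β κ (v x) (gu x)) μ := by
    unfold denomD
    exact (continuous_rpow_const' (by positivity)).measurable.comp_aemeasurable
      ((((continuous_rpow_const' hα.le).measurable.comp_aemeasurable hw0A).const_mul (β ^ α)).const_add 1)
  have hfA_meas : AEStronglyMeasurable fA μ := by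
    simp only [hfAdef]
    apply AEMeasurable.aestronglyMeasurable
    exact ((((hv.1.1.aemeasurable.pow_const 2).const_mul (1 - κ)).add_const κ).div hdenomA).mul
      ((hu.2.1.1.inner hψ.2.1.1).aemeasurable)
  have hfB_meas : AEStronglyMeasurable fB μ := by
    simp only [hfBdef]
    apply AEMeasurable.aestronglyMeasurable
    exact ((((hv.2.1.1.inner hφ.2.1.1).aemeasurable.const_mul (2 * ρ)).sub
        (hφ.1.1.aemeasurable.const_mul δ)).add
      (((((hu.2.1.1.norm.aemeasurable.pow_const 2).const_mul (1 - κ)).div hdenomA).mul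
        hv.1.1.aemeasurable).mul hφ.1.1.aemeasurable))
  -- integrability building blocks
  have hgu2 : Integrable (fun x => ‖gu x‖ * ‖gu x‖) μ :=
    integrable_mul_L2 hu.2.1.norm hu.2.1.norm
  have hgv2 : Integrable (fun x => ‖gv x‖ * ‖gv x‖) μ :=
    integrable_mul_L2 hv.2.1.norm hv.2.1.norm
  have hguψ : Integrable (fun x => ‖gu x‖ * ‖gψ x‖) μ :=
    integrable_mul_L2 hu.2.1.norm hψ.2.1.norm
  have hgvφ : Integrable (fun x => ‖gv x‖ * ‖gφ x‖) μ :=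
    integrable_mul_L2 hv.2.1.norm hφ.2.1.norm
  have hsum2 : MemLp (fun x => ‖gu x‖ + ‖gψ x‖) 2 μ := by
    have h := hu.2.1.norm.add hψ.2.1.norm
    simpa [Pi.add_def] using h
  have hsumv2 : MemLp (fun x => ‖gv x‖ + ‖gφ x‖) 2 μ := by
    have h := hv.2.1.norm.add hφ.2.1.norm
    simpa [Pi.add_def] using h
  have hsumψ : Integrable (fun x => (‖gu x‖ + ‖gψ x‖) * ‖gψ x‖) μ :=
    integrable_mul_L2 hsum2 hψ.2.1.norm
  have hsumsq : Integrable (fun x => (‖gu x‖ + ‖gψ x‖) * (‖gu x‖ + ‖gψ x‖)) μ :=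
    integrable_mul_L2 hsum2 hsum2
  have hsumφ : Integrable (fun x => (‖gv x‖ + ‖gφ x‖) * ‖gφ x‖) μ :=
    integrable_mul_L2 hsumv2 hφ.2.1.norm
  -- integrability of fA and fB
  have hfA_int : Integrable fA μ := by
    refine Integrable.mono' (g := fun x => ((1 - κ) * Mv ^ 2 + κ) * (‖gu x‖ * ‖gψ x‖))
      (hguψ.const_mul _) hfA_meas ?_
    filter_upwards [hvb] with x hx
    simp only [hfAdef]
    rw [Real.norm_eq_abs]
    have hvsq : v x ^ 2 ≤ Mv ^ 2 := by nlinarith [sq_abs (v x), abs_nonneg (v x)]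
    have h1 : |((1 - κ) * v x ^ 2 + κ) / denomD α β κ (v x) (gu x)| ≤ (1 - κ) * Mv ^ 2 + κ := by
      rw [abs_of_nonneg (div_nonneg (hc0 _) (hdenpos _ _).le)]
      exact (div_le_self (hc0 _) (hden1 _ _)).trans (by nlinarith)
    exact abs_mul_le₂ h1 (abs_real_inner_le_norm _ _)
  have hfB_int : Integrable fB μ := by
    refine Integrable.mono' (g := fun x => 2 * ρ * (‖gv x‖ * ‖gφ x‖) + δ * Mφ
        + ((1 - κ) * Mv * Mφ) * (‖gu x‖ * ‖gu x‖))
      (((hgvφ.const_mul _).add (integrable_const _)).add (hgu2.const_mul _)) hfB_meas ?_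
    filter_upwards [hvb, hφb] with x hx1 hx2
    simp only [hfBdef]
    rw [Real.norm_eq_abs]
    have p1 : |2 * ρ * (inner ℝ (gv x) (gφ x) : ℝ)| ≤ 2 * ρ * (‖gv x‖ * ‖gφ x‖) :=
      abs_mul_le₂ (le_of_eq (abs_of_nonneg (by positivity))) (abs_real_inner_le_norm _ _)
    have p2 : |δ * φ x| ≤ δ * Mφ :=
      abs_mul_le₂ (le_of_eq (abs_of_nonneg hδ.le)) hx2
    have h3a : |(1 - κ) * ‖gu x‖ ^ 2 / denomD α β κ (v x) (gu x)|
        ≤ (1 - κ) * (‖gu x‖ * ‖gu x‖) := by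
      rw [abs_of_nonneg (div_nonneg (by positivity) (hdenpos _ _).le)]
      refine (div_le_self (by positivity) (hden1 _ _)).trans ?_
      nlinarith [norm_nonneg (gu x)]
    have p3 : |(1 - κ) * ‖gu x‖ ^ 2 / denomD α β κ (v x) (gu x) * v x * φ x|
        ≤ (1 - κ) * (‖gu x‖ * ‖gu x‖) * Mv * Mφ := abs_mul_le₃ h3a hx1 hx2
    calc |2 * ρ * (inner ℝ (gv x) (gφ x) : ℝ) - δ * φ x
        + (1 - κ) * ‖gu x‖ ^ 2 / denomD α β κ (v x) (gu x) * v x * φ x|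
        ≤ |2 * ρ * (inner ℝ (gv x) (gφ x) : ℝ)| + |δ * φ x|
          + |(1 - κ) * ‖gu x‖ ^ 2 / denomD α β κ (v x) (gu x) * v x * φ x| :=
        abs_sub_add_le' _ _ _
      _ ≤ 2 * ρ * (‖gv x‖ * ‖gφ x‖) + δ * Mφ + (1 - κ) * (‖gu x‖ * ‖gu x‖) * Mv * Mφ := by
        linarith
      _ = 2 * ρ * (‖gv x‖ * ‖gφ x‖) + δ * Mφ + (1 - κ) * Mv * Mφ * (‖gu x‖ * ‖gu x‖) := by
        ring
  -- the uniform bound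
  set bound : Euc d → ℝ := fun x =>
    ((1 - κ) * M ^ 2 + κ) * ((‖gu x‖ + ‖gψ x‖) * ‖gψ x‖)
      + 2 * ρ * ((‖gv x‖ + ‖gφ x‖) * ‖gφ x‖) + δ * Mφ
      + ((1 - κ) * M * Mφ) * ((‖gu x‖ + ‖gψ x‖) * (‖gu x‖ + ‖gψ x‖)) with hbounddef
  have hbound_int : Integrable bound μ := by
    simp only [hbounddef]
    exact (((hsumψ.const_mul _).add (hsumφ.const_mul _)).add (integrable_const _)).add
      (hsumsq.const_mul _)
  have h_bound : ∀ᵐ x ∂μ, ∀ t ∈ Metric.ball (0:ℝ) 1, ‖F' t x‖ ≤ bound x := by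
    filter_upwards [hvb, hφb] with x hx1 hx2
    intro t ht
    have ht1 : |t| ≤ 1 := by
      have := Metric.mem_ball.mp ht
      rw [Real.dist_eq, sub_zero] at this
      exact this.le
    have hsb : |v x + t * φ x| ≤ M := by
      calc |v x + t * φ x| ≤ |v x| + |t * φ x| := abs_add_le _ _
      _ ≤ Mv + Mφ := by
          rw [abs_mul]
          have : |t| * |φ x| ≤ 1 * Mφ :=
            mul_le_mul ht1 hx2 (abs_nonneg _) zero_le_one
          rw [one_mul] at this
          linarith
      _ = M := rfl
    have hgb : ‖gu x + t • gψ x‖ ≤ ‖gu x‖ + ‖gψ x‖ := by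
      calc ‖gu x + t • gψ x‖ ≤ ‖gu x‖ + ‖t • gψ x‖ := norm_add_le _ _
      _ ≤ ‖gu x‖ + ‖gψ x‖ := by
          rw [norm_smul, Real.norm_eq_abs]
          have : |t| * ‖gψ x‖ ≤ 1 * ‖gψ x‖ :=
            mul_le_mul_of_nonneg_right ht1 (norm_nonneg _)
          rw [one_mul] at this
          linarith
    have hhb : ‖gv x + t • gφ x‖ ≤ ‖gv x‖ + ‖gφ x‖ := by
      calc ‖gv x + t • gφ x‖ ≤ ‖gv x‖ + ‖t • gφ x‖ := norm_add_le _ _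
      _ ≤ ‖gv x‖ + ‖gφ x‖ := by
          rw [norm_smul, Real.norm_eq_abs]
          have : |t| * ‖gφ x‖ ≤ 1 * ‖gφ x‖ :=
            mul_le_mul_of_nonneg_right ht1 (norm_nonneg _)
          rw [one_mul] at this
          linarith
    have hcle : (1 - κ) * (v x + t * φ x) ^ 2 + κ ≤ (1 - κ) * M ^ 2 + κ := by
      nlinarith [sq_abs (v x + t * φ x), abs_nonneg (v x + t * φ x),
        mul_le_mul hsb hsb (abs_nonneg _) hM0]
    have h1 : |((1 - κ) * (v x + t * φ x) ^ 2 + κ)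
        / denomD α β κ (v x + t * φ x) (gu x + t • gψ x)| ≤ (1 - κ) * M ^ 2 + κ := by
      rw [abs_of_nonneg (div_nonneg (hc0 _) (hdenpos _ _).le)]
      exact (div_le_self (hc0 _) (hden1 _ _)).trans hcle
    have hinn1 : |(inner ℝ (gu x + t • gψ x) (gψ x) : ℝ)| ≤ (‖gu x‖ + ‖gψ x‖) * ‖gψ x‖ :=
      (abs_real_inner_le_norm _ _).trans
        (mul_le_mul_of_nonneg_right hgb (norm_nonneg _))
    have p1 := abs_mul_le₂ h1 hinn1
    have hinn2 : |(inner ℝ (gv x + t • gφ x) (gφ x) : ℝ)| ≤ (‖gv x‖ + ‖gφ x‖) * ‖gφ x‖ :=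
      (abs_real_inner_le_norm _ _).trans
        (mul_le_mul_of_nonneg_right hhb (norm_nonneg _))
    have p2 : |2 * ρ * (inner ℝ (gv x + t • gφ x) (gφ x) : ℝ)|
        ≤ 2 * ρ * ((‖gv x‖ + ‖gφ x‖) * ‖gφ x‖) :=
      abs_mul_le₂ (le_of_eq (abs_of_nonneg (by positivity))) hinn2
    have p3 : |δ * φ x| ≤ δ * Mφ := abs_mul_le₂ (le_of_eq (abs_of_nonneg hδ.le)) hx2
    have h4a : |(1 - κ) * ‖gu x + t • gψ x‖ ^ 2
        / denomD α β κ (v x + t * φ x) (gu x + t • gψ x)|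
        ≤ (1 - κ) * ((‖gu x‖ + ‖gψ x‖) * (‖gu x‖ + ‖gψ x‖)) := by
      rw [abs_of_nonneg (div_nonneg (by positivity) (hdenpos _ _).le)]
      refine (div_le_self (by positivity) (hden1 _ _)).trans ?_
      have hsq : ‖gu x + t • gψ x‖ ^ 2 ≤ (‖gu x‖ + ‖gψ x‖) * (‖gu x‖ + ‖gψ x‖) := by
        nlinarith [norm_nonneg (gu x + t • gψ x)]
      nlinarith
    have p4 : |(1 - κ) * ‖gu x + t • gψ x‖ ^ 2
        / denomD α β κ (v x + t * φ x) (gu x + t • gψ x) * (v x + t * φ x) * φ x|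
        ≤ (1 - κ) * ((‖gu x‖ + ‖gψ x‖) * (‖gu x‖ + ‖gψ x‖)) * M * Mφ :=
      abs_mul_le₃ h4a hsb hx2
    simp only [hF'def, hbounddef]
    rw [Real.norm_eq_abs]
    have step : |(((1 - κ) * (v x + t * φ x) ^ 2 + κ)
          / denomD α β κ (v x + t * φ x) (gu x + t • gψ x)) *
        (inner ℝ (gu x + t • gψ x) (gψ x) : ℝ)
      + (2 * ρ * (inner ℝ (gv x + t • gφ x) (gφ x) : ℝ) - δ * φ x
        + ((1 - κ) * ‖gu x + t • gψ x‖ ^ 2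
            / denomD α β κ (v x + t * φ x) (gu x + t • gψ x)) * (v x + t * φ x) * φ x)|
        ≤ |(((1 - κ) * (v x + t * φ x) ^ 2 + κ)
            / denomD α β κ (v x + t * φ x) (gu x + t • gψ x)) *
          (inner ℝ (gu x + t • gψ x) (gψ x) : ℝ)|
        + (|2 * ρ * (inner ℝ (gv x + t • gφ x) (gφ x) : ℝ)| + |δ * φ x|
          + |((1 - κ) * ‖gu x + t • gψ x‖ ^ 2
              / denomD α β κ (v x + t * φ x) (gu x + t • gψ x)) * (v x + t * φ x) * φ x|) :=
      (abs_add_le _ _).trans (add_le_add le_rfl (abs_sub_add_le' _ _ _))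
    linarith
  -- integrability of F 0
  have hF0_int : Integrable (F 0) μ := by
    have hgint : Integrable (fun x => ((1 - κ) * Mv ^ 2 + κ) / 2 * (‖gu x‖ * ‖gu x‖)
        + ρ * (‖gv x‖ * ‖gv x‖) + δ * (1 + Mv)) μ := by
      have h1 : Integrable (fun x => ((1 - κ) * Mv ^ 2 + κ) / 2 * (‖gu x‖ * ‖gu x‖)) μ :=
        hgu2.const_mul _
      have h2 : Integrable (fun x => ρ * (‖gv x‖ * ‖gv x‖)) μ := hgv2.const_mul ρ
      have h3 : Integrable (fun _ : Euc d => δ * (1 + Mv)) μ := integrable_const _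
      exact (h1.add h2).add h3
    refine Integrable.mono' hgint (hFmeas 0) ?_
    filter_upwards [hvb] with x hx
    simp only [hFdef, zero_mul, add_zero, zero_smul]
    rw [Real.norm_eq_abs]
    have hq1 : (1:ℝ) ≤ (1 + β ^ α * (((1 - κ) * v x ^ 2 + κ) * ‖gu x‖ ^ 2) ^ α) ^ (1/α) :=
      one_le_aux hβ (hw0 _ _) _ hαinv
    have hnum0 : 0 ≤ ((1 - κ) * v x ^ 2 + κ) * ‖gu x‖ ^ 2 := hw0 _ _
    have hnumle : ((1 - κ) * v x ^ 2 + κ) * ‖gu x‖ ^ 2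
        ≤ ((1 - κ) * Mv ^ 2 + κ) * (‖gu x‖ * ‖gu x‖) := by
      have hvsq : v x ^ 2 ≤ Mv ^ 2 := by nlinarith [sq_abs (v x), abs_nonneg (v x)]
      have hcle2 : (1 - κ) * v x ^ 2 + κ ≤ (1 - κ) * Mv ^ 2 + κ := by nlinarith
      calc ((1 - κ) * v x ^ 2 + κ) * ‖gu x‖ ^ 2
          ≤ ((1 - κ) * Mv ^ 2 + κ) * ‖gu x‖ ^ 2 :=
            mul_le_mul_of_nonneg_right hcle2 (by positivity)
        _ = ((1 - κ) * Mv ^ 2 + κ) * (‖gu x‖ * ‖gu x‖) := by ring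
    have hA : |(((1 - κ) * v x ^ 2 + κ) * ‖gu x‖ ^ 2) /
        (2 * (1 + β ^ α * (((1 - κ) * v x ^ 2 + κ) * ‖gu x‖ ^ 2) ^ α) ^ (1/α))|
        ≤ (((1 - κ) * Mv ^ 2 + κ) * (‖gu x‖ * ‖gu x‖)) / 2 := by
      have hq0 : (0:ℝ) < 2 * (1 + β ^ α * (((1 - κ) * v x ^ 2 + κ) * ‖gu x‖ ^ 2) ^ α) ^ (1/α) :=
        by linarith
      rw [abs_of_nonneg (div_nonneg hnum0 hq0.le)]
      calc (((1 - κ) * v x ^ 2 + κ) * ‖gu x‖ ^ 2) /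
          (2 * (1 + β ^ α * (((1 - κ) * v x ^ 2 + κ) * ‖gu x‖ ^ 2) ^ α) ^ (1/α))
          ≤ (((1 - κ) * v x ^ 2 + κ) * ‖gu x‖ ^ 2) / 2 := by
            apply div_le_div_of_nonneg_left hnum0 two_pos
            linarith
        _ ≤ (((1 - κ) * Mv ^ 2 + κ) * (‖gu x‖ * ‖gu x‖)) / 2 := by linarith
    have hB2 : |ρ * ‖gv x‖ ^ 2| ≤ ρ * (‖gv x‖ * ‖gv x‖) := by
      rw [abs_of_nonneg (by positivity)]
      nlinarith [norm_nonneg (gv x)]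
    have hC : |δ * (1 - v x)| ≤ δ * (1 + Mv) := by
      refine abs_mul_le₂ (le_of_eq (abs_of_nonneg hδ.le)) ?_
      have := abs_sub_add_le' 1 (v x) 0
      simp only [add_zero, abs_zero, abs_one] at this
      linarith
    calc |(((1 - κ) * v x ^ 2 + κ) * ‖gu x‖ ^ 2) /
          (2 * (1 + β ^ α * (((1 - κ) * v x ^ 2 + κ) * ‖gu x‖ ^ 2) ^ α) ^ (1/α))
        + ρ * ‖gv x‖ ^ 2 + δ * (1 - v x)|
        ≤ |(((1 - κ) * v x ^ 2 + κ) * ‖gu x‖ ^ 2) /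
            (2 * (1 + β ^ α * (((1 - κ) * v x ^ 2 + κ) * ‖gu x‖ ^ 2) ^ α) ^ (1/α))
          + ρ * ‖gv x‖ ^ 2| + |δ * (1 - v x)| := abs_add_le _ _
      _ ≤ |(((1 - κ) * v x ^ 2 + κ) * ‖gu x‖ ^ 2) /
            (2 * (1 + β ^ α * (((1 - κ) * v x ^ 2 + κ) * ‖gu x‖ ^ 2) ^ α) ^ (1/α))|
          + |ρ * ‖gv x‖ ^ 2| + |δ * (1 - v x)| := by
            have := abs_add_le ((((1 - κ) * v x ^ 2 + κ) * ‖gu x‖ ^ 2) /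
              (2 * (1 + β ^ α * (((1 - κ) * v x ^ 2 + κ) * ‖gu x‖ ^ 2) ^ α) ^ (1/α)))
              (ρ * ‖gv x‖ ^ 2)
            linarith
      _ ≤ (((1 - κ) * Mv ^ 2 + κ) * (‖gu x‖ * ‖gu x‖)) / 2 + ρ * (‖gv x‖ * ‖gv x‖)
          + δ * (1 + Mv) := by linarith
      _ = ((1 - κ) * Mv ^ 2 + κ) / 2 * (‖gu x‖ * ‖gu x‖) + ρ * (‖gv x‖ * ‖gv x‖)
          + δ * (1 + Mv) := by ring
  -- split of F' 0
  have hsplit : F' 0 = fun x => fA x + fB x := by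
    funext x
    simp only [hF'def, hfAdef, hfBdef, zero_mul, add_zero, zero_smul]
  have hF'0_meas : AEStronglyMeasurable (F' 0) μ := by
    rw [hsplit]
    exact hfA_meas.add hfB_meas
  -- the dominated-derivative theorem
  have Hmain := hasDerivAt_integral_of_dominated_loc_of_deriv_le (μ := μ) (F := F) (F' := F')
    (x₀ := (0:ℝ)) (s := Metric.ball 0 1) (bound := bound) (Metric.ball_mem_nhds _ one_pos)
    (Filter.Eventually.of_forall hFmeas) hF0_int hF'0_meas h_bound hbound_int
    (Filter.Eventually.of_forall fun x => fun t _ => hptwise x t)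
  obtain ⟨-, H⟩ := Hmain
  have hfun : (fun t : ℝ => energyJ α β κ ρ δ D (fun x => v x + t * φ x)
      (fun x => gu x + t • gψ x) (fun x => gv x + t • gφ x)) = fun t => ∫ a, F t a ∂μ := by
    funext t
    simp only [energyJ, hFdef, hμdef]
  have hval : formA α β κ D v gu gψ + formB α β κ ρ δ D v φ gu gv gφ = ∫ a, F' 0 a ∂μ := by
    rw [hsplit, integral_add hfA_int hfB_int]
    simp only [formA, formB, hfAdef, hfBdef, hμdef]
  rw [hfun, hval]
  exact H

end
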